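/- Under the same hypotheses, the combinations n_x(row 3) − n_y(row 2) and n_x(row 2) + n_y(row 3) of the adjoint system give, after applying the jump operator: [v_n(−n_y∂_nψ₂ + n_x∂_nψ₃ + v_t∂_nψ₄)] + [v_n](n_x∂_tψ₂ + n_y∂_tψ₃) = 0 and [∂_nψ₁] + [(u+v_n n_x)∂_nψ₂ + (v+v_n n_y)∂_nψ₃ + (H+v_n²)∂_nψ₄] + [v_n]v_t∂_tψ₄ = 0. -/
import Mathlib


/-- The 2-D Euler flux Jacobian in the direction `(nx, ny)`:  `An γ u v H nx ny = nx • A + ny • B`,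
where `A`, `B` are the Jacobians of the Euler fluxes w.r.t. conservative variables. -/
noncomputable def An (γ u v H nx ny : ℝ) : Matrix (Fin 4) (Fin 4) ℝ :=
  !![0, nx, ny, 0;
     (γ-1)*((u^2+v^2)/2)*nx - u*(u*nx+v*ny), (u*nx+v*ny)-(γ-2)*u*nx, u*ny-(γ-1)*v*nx, (γ-1)*nx;
     (γ-1)*((u^2+v^2)/2)*ny - v*(u*nx+v*ny), v*nx-(γ-1)*u*ny, (u*nx+v*ny)-(γ-2)*v*ny, (γ-1)*ny;
     ((γ-1)*((u^2+v^2)/2)-H)*(u*nx+v*ny), H*nx-(γ-1)*u*(u*nx+v*ny), H*ny-(γ-1)*v*(u*nx+v*ny), γ*(u*nx+v*ny)]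

/- Across a Rankine–Hugoniot shock, with the adjoint ψ and its tangential derivative
continuous, the combinations n_x(row 3) − n_y(row 2) and n_x(row 2) + n_y(row 3) of
the adjoint system yield, after applying the jump operator, the two relations
(eq:adj_RH_3) and (eq:adj_RH_4) of the paper. -/
theorem adjoint_shock_jump_relations_3_4 (γ H vt nx ny vnp vnm ρp ρm : ℝ)
    (Dnp Dnm Dt : Fin 4 → ℝ)
    (hγ : 1 < γ) (hn : nx^2 + ny^2 = 1)
    (hρp : 0 < ρp) (hρm : 0 < ρm)
    (hmass : ρp * vnp = ρm * vnm)
    (hadjp : (An γ (vnp*nx - vt*ny) (vnp*ny + vt*nx) H nx ny).transpose.mulVec Dnp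
           + (An γ (vnp*nx - vt*ny) (vnp*ny + vt*nx) H (-ny) nx).transpose.mulVec Dt = 0)
    (hadjm : (An γ (vnm*nx - vt*ny) (vnm*ny + vt*nx) H nx ny).transpose.mulVec Dnm
           + (An γ (vnm*nx - vt*ny) (vnm*ny + vt*nx) H (-ny) nx).transpose.mulVec Dt = 0) :
    (vnp * (-ny * Dnp 1 + nx * Dnp 2 + vt * Dnp 3)
       - vnm * (-ny * Dnm 1 + nx * Dnm 2 + vt * Dnm 3))
      + (vnp - vnm) * (nx * Dt 1 + ny * Dt 2) = 0 ∧
    (Dnp 0 - Dnm 0)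
      + (((vnp*nx - vt*ny) + vnp*nx) * Dnp 1 + ((vnp*ny + vt*nx) + vnp*ny) * Dnp 2
          + (H + vnp^2) * Dnp 3)
      - (((vnm*nx - vt*ny) + vnm*nx) * Dnm 1 + ((vnm*ny + vt*nx) + vnm*ny) * Dnm 2
          + (H + vnm^2) * Dnm 3)
      + (vnp - vnm) * vt * Dt 3 = 0 := by
  have ep1 := congrFun hadjp 1
  have ep2 := congrFun hadjp 2
  have ep3 := congrFun hadjp 3
  have em1 := congrFun hadjm 1
  have em2 := congrFun hadjm 2
  have em3 := congrFun hadjm 3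
  simp only [An, Matrix.mulVec, dotProduct, Fin.sum_univ_four, Matrix.transpose_apply,
    Matrix.cons_val', Matrix.cons_val_zero, Matrix.cons_val_one, Matrix.head_cons,
    Matrix.cons_val_two, Matrix.cons_val_three, Matrix.tail_cons, Matrix.head_fin_const,
    Matrix.empty_val', Matrix.cons_val_fin_one, Matrix.of_apply, Pi.add_apply, Pi.zero_apply,
    Matrix.vecHead, Matrix.vecTail, Function.comp_apply, Fin.succ_zero_eq_one,
    Fin.succ_one_eq_two] at ep1 ep2 ep3 em1 em2 em3
  constructor
  · linear_combination nx*ep2 - ny*ep1 - nx*em2 + ny*em1 + vt*ep3 - vt*em3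
      + ((1)*ny*vnm*(Dt 2) + (-1)*ny*vnm*(Dnm 1) + (-1)*ny*vnp*(Dt 2) + (1)*ny*vnp*(Dnp 1) + (1)*nx*vnm*(Dt 1) + (1)*nx*vnm*(Dnm 2) + (-1)*nx*vnp*(Dt 1) + (-1)*nx*vnp*(Dnp 2) + (1)*vt*vnm*(Dnm 3) + (-1)*vt*vnp*(Dnp 3) + (1)*vt*ny*(Dnm 2) + (-1)*vt*ny*(Dnp 2) + (1)*vt*ny*ny*vnm*(Dnm 3) + (-1)*vt*ny*ny*vnp*(Dnp 3) + (1)*vt*nx*(Dnm 1) + (-1)*vt*nx*(Dnp 1) + (1)*vt*nx*nx*vnm*(Dnm 3) + (-1)*vt*nx*nx*vnp*(Dnp 3) + (-1)*γ*vt*ny*(Dnm 2) + (1)*γ*vt*ny*(Dnp 2) + (-1)*γ*vt*ny*ny*vnm*(Dnm 3) + (1)*γ*vt*ny*ny*vnp*(Dnp 3) + (-1)*γ*vt*nx*(Dnm 1) + (1)*γ*vt*nx*(Dnp 1) + (-1)*γ*vt*nx*nx*vnm*(Dnm 3) + (1)*γ*vt*nx*nx*vnp*(Dnp 3)) * hn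
  · linear_combination nx*ep1 + ny*ep2 - nx*em1 - ny*em2 + vnp*ep3 - vnm*em3
      + ((1)*(Dnm 0) + (-1)*(Dnp 0) + (1)*vnm*vnm*(Dnm 3) + (-1)*vnp*vnp*(Dnp 3) + (-1)*ny*vnm*(Dt 1) + (3)*ny*vnm*(Dnm 2) + (1)*ny*vnp*(Dt 1) + (-3)*ny*vnp*(Dnp 2) + (1)*ny*ny*vnm*vnm*(Dnm 3) + (-1)*ny*ny*vnp*vnp*(Dnp 3) + (1)*nx*vnm*(Dt 2) + (3)*nx*vnm*(Dnm 1) + (-1)*nx*vnp*(Dt 2) + (-3)*nx*vnp*(Dnp 1) + (1)*nx*nx*vnm*vnm*(Dnm 3) + (-1)*nx*nx*vnp*vnp*(Dnp 3) + (1)*vt*vnm*(Dt 3) + (-1)*vt*vnp*(Dt 3) + (-1)*vt*ny*(Dnm 1) + (1)*vt*ny*(Dnp 1) + (1)*vt*ny*ny*vnm*(Dt 3) + (-1)*vt*ny*ny*vnp*(Dt 3) + (1)*vt*nx*(Dnm 2) + (-1)*vt*nx*(Dnp 2) + (1)*vt*nx*nx*vnm*(Dt 3) + (-1)*vt*nx*nx*vnp*(Dt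 3) + (1)*H*(Dnm 3) + (-1)*H*(Dnp 3) + (1)*γ*ny*vnm*(Dt 1) + (-1)*γ*ny*vnm*(Dnm 2) + (-1)*γ*ny*vnp*(Dt 1) + (1)*γ*ny*vnp*(Dnp 2) + (-1)*γ*ny*ny*vnm*vnm*(Dnm 3) + (1)*γ*ny*ny*vnp*vnp*(Dnp 3) + (-1)*γ*nx*vnm*(Dt 2) + (-1)*γ*nx*vnm*(Dnm 1) + (1)*γ*nx*vnp*(Dt 2) + (1)*γ*nx*vnp*(Dnp 1) + (-1)*γ*nx*nx*vnm*vnm*(Dnm 3) + (1)*γ*nx*nx*vnp*vnp*(Dnp 3) + (-1)*γ*vt*ny*ny*vnm*(Dt 3) + (1)*γ*vt*ny*ny*vnp*(Dt 3) + (-1)*γ*vt*nx*nx*vnm*(Dt 3) + (1)*γ*vt*nx*nx*vnp*(Dt 3)) * hn
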